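/- Let k be a field, n ≥ 2, h ∈ k[X] with h(0) ≠ 0 and deg h < n, and R = k[X,Y,Z]/(XⁿY - Z² - h(X)Z). Let μ ∈ k* satisfy h(μX) = h(X). Then the map L_μ defined by L_μ(x) = μx, L_μ(y) = μ^{-n}y, L_μ(z) = z is a k-algebra automorphism of R. -/
import Mathlib


noncomputable section

/-- The defining relation `XⁿY - Z² - h(X)Z` in `k[X,Y,Z]` (variables `X 0, X 1, X 2`). -/
def danRel (k : Type*) [Field k] (n : ℕ) (h : Polynomial k) : MvPolynomial (Fin 3) k :=
  MvPolynomial.X 0 ^ n * MvPolynomial.X 1 - MvPolynomial.X 2 ^ 2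
    - Polynomial.aeval (MvPolynomial.X 0 : MvPolynomial (Fin 3) k) h * MvPolynomial.X 2

/-- The coordinate ring `R = k[X,Y,Z]/(XⁿY - Z² - h(X)Z)` of a Danielewski surface. -/
abbrev DanRing (k : Type*) [Field k] (n : ℕ) (h : Polynomial k) : Type _ :=
  MvPolynomial (Fin 3) k ⧸ Ideal.span {danRel k n h}

/-- The image `x` of `X` in `R`. -/
def dx (k : Type*) [Field k] (n : ℕ) (h : Polynomial k) : DanRing k n h :=
  Ideal.Quotient.mk _ (MvPolynomial.X 0)

/-- The image `y` of `Y` in `R`. -/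
def dy (k : Type*) [Field k] (n : ℕ) (h : Polynomial k) : DanRing k n h :=
  Ideal.Quotient.mk _ (MvPolynomial.X 1)

/-- The image `z` of `Z` in `R`. -/
def dz (k : Type*) [Field k] (n : ℕ) (h : Polynomial k) : DanRing k n h :=
  Ideal.Quotient.mk _ (MvPolynomial.X 2)

/-- auxiliary scaling map on the polynomial ring -/
def psiAux (k : Type*) [Field k] (n : ℕ) (c : k) :
    MvPolynomial (Fin 3) k →ₐ[k] MvPolynomial (Fin 3) k :=
  MvPolynomial.aeval ![MvPolynomial.C c * MvPolynomial.X 0,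
    MvPolynomial.C (c⁻¹ ^ n) * MvPolynomial.X 1, MvPolynomial.X 2]

lemma psiAux_X0 (k : Type*) [Field k] (n : ℕ) (c : k) :
    psiAux k n c (MvPolynomial.X 0) = MvPolynomial.C c * MvPolynomial.X 0 := by
  simp [psiAux]

lemma psiAux_X1 (k : Type*) [Field k] (n : ℕ) (c : k) :
    psiAux k n c (MvPolynomial.X 1) = MvPolynomial.C (c⁻¹ ^ n) * MvPolynomial.X 1 := by
  simp [psiAux]

lemma psiAux_X2 (k : Type*) [Field k] (n : ℕ) (c : k) :
    psiAux k n c (MvPolynomial.X 2) = MvPolynomial.X 2 := by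
  simp [psiAux]

lemma psiAux_C (k : Type*) [Field k] (n : ℕ) (c a : k) :
    psiAux k n c (MvPolynomial.C a) = MvPolynomial.C a := by
  simp [psiAux]

lemma psiAux_rel (k : Type*) [Field k] (n : ℕ) (h : Polynomial k) (c : k) (hc : c ≠ 0)
    (hinv : h.comp (Polynomial.C c * Polynomial.X) = h) :
    psiAux k n c (danRel k n h) = danRel k n h := by
  have haev : Polynomial.aeval (MvPolynomial.C c * MvPolynomial.X 0 : MvPolynomial (Fin 3) k) h
      = Polynomial.aeval (MvPolynomial.X 0 : MvPolynomial (Fin 3) k) h := by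
    conv_rhs => rw [← hinv]
    rw [Polynomial.aeval_comp]
    simp [MvPolynomial.algebraMap_eq]
  have hC : (MvPolynomial.C c : MvPolynomial (Fin 3) k) ^ n * MvPolynomial.C c⁻¹ ^ n = 1 := by
    rw [← map_pow, ← map_pow, ← map_mul, ← mul_pow, mul_inv_cancel₀ hc, one_pow, map_one]
  have hco : (psiAux k n c) (Polynomial.aeval (MvPolynomial.X 0 : MvPolynomial (Fin 3) k) h)
      = Polynomial.aeval (MvPolynomial.C c * MvPolynomial.X 0 : MvPolynomial (Fin 3) k) h := by
    rw [← Polynomial.aeval_algHom_apply, psiAux_X0]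
  simp only [danRel, map_sub, map_mul, map_pow, psiAux_X0, psiAux_X1, psiAux_X2, hco, haev,
    map_pow]
  linear_combination (MvPolynomial.X 0 ^ n * MvPolynomial.X 1) * hC

/-- The induced algebra endomorphism of `DanRing`. -/
def danHom (k : Type*) [Field k] (n : ℕ) (h : Polynomial k) (c : k) (hc : c ≠ 0)
    (hinv : h.comp (Polynomial.C c * Polynomial.X) = h) :
    DanRing k n h →ₐ[k] DanRing k n h :=
  Ideal.Quotient.liftₐ _ ((Ideal.Quotient.mkₐ k _).comp (psiAux k n c)) (by
    intro a ha
    rw [Ideal.mem_span_singleton] at ha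
    obtain ⟨p, rfl⟩ := ha
    simp only [AlgHom.comp_apply, map_mul, psiAux_rel k n h c hc hinv, Ideal.Quotient.mkₐ_eq_mk]
    rw [Ideal.Quotient.eq_zero_iff_mem.2 (Ideal.mem_span_singleton_self _), zero_mul])

lemma danHom_mk (k : Type*) [Field k] (n : ℕ) (h : Polynomial k) (c : k) (hc : c ≠ 0)
    (hinv : h.comp (Polynomial.C c * Polynomial.X) = h) (p : MvPolynomial (Fin 3) k) :
    danHom k n h c hc hinv (Ideal.Quotient.mk _ p) = Ideal.Quotient.mk _ (psiAux k n c p) := rfl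

lemma danHom_comp (k : Type*) [Field k] (n : ℕ) (h : Polynomial k) (c d : k)
    (hc : c ≠ 0) (hd : d ≠ 0) (hcd : c * d = 1)
    (hinvc : h.comp (Polynomial.C c * Polynomial.X) = h)
    (hinvd : h.comp (Polynomial.C d * Polynomial.X) = h) :
    (danHom k n h c hc hinvc).comp (danHom k n h d hd hinvd) = AlgHom.id k _ := by
  have hdc : d * c = 1 := by rw [mul_comm]; exact hcd
  have hdi : d⁻¹ = c := inv_eq_of_mul_eq_one_left hcd
  have hci : c⁻¹ = d := inv_eq_of_mul_eq_one_left hdc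
  apply Ideal.Quotient.algHom_ext
  apply MvPolynomial.algHom_ext
  intro i
  fin_cases i <;>
    simp only [AlgHom.comp_apply, Ideal.Quotient.mkₐ_eq_mk, danHom_mk, AlgHom.id_apply] <;>
    congr 1
  · show psiAux k n c (psiAux k n d (MvPolynomial.X 0)) = MvPolynomial.X 0
    rw [psiAux_X0, map_mul, psiAux_C, psiAux_X0, ← mul_assoc, ← map_mul, hdc, map_one, one_mul]
  · show psiAux k n c (psiAux k n d (MvPolynomial.X 1)) = MvPolynomial.X 1
    rw [psiAux_X1, map_mul, psiAux_C, psiAux_X1, hdi, hci, ← mul_assoc, ← map_mul, ← mul_pow,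
      hcd, one_pow, map_one, one_mul]
  · show psiAux k n c (psiAux k n d (MvPolynomial.X 2)) = MvPolynomial.X 2
    rw [psiAux_X2, psiAux_X2]

/-- For `μ ∈ k*` with `h(μX) = h(X)`, the map `L_μ : x ↦ μx`, `y ↦ μ⁻ⁿy`, `z ↦ z`
is a `k`-algebra automorphism of `R`. -/
theorem stmt_14 (k : Type*) [Field k] (n : ℕ) (hn : 2 ≤ n)
    (h : Polynomial k) (h0 : h.coeff 0 ≠ 0) (hdeg : h.natDegree < n)
    (μ : k) (hμ : μ ≠ 0)
    (hinv : h.comp (Polynomial.C μ * Polynomial.X) = h) :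
    ∃ L : DanRing k n h ≃ₐ[k] DanRing k n h,
      L (dx k n h) = algebraMap k (DanRing k n h) μ * dx k n h ∧
      L (dy k n h) = algebraMap k (DanRing k n h) (μ⁻¹ ^ n) * dy k n h ∧
      L (dz k n h) = dz k n h := by
  have hinv' : h.comp (Polynomial.C μ⁻¹ * Polynomial.X) = h := by
    conv_lhs => rw [← hinv]
    rw [Polynomial.comp_assoc, Polynomial.mul_comp, Polynomial.C_comp, Polynomial.X_comp,
      ← mul_assoc, ← map_mul, mul_inv_cancel₀ hμ, map_one, one_mul, Polynomial.comp_X]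
  refine ⟨AlgEquiv.ofAlgHom (danHom k n h μ hμ hinv) (danHom k n h μ⁻¹ (inv_ne_zero hμ) hinv')
    (danHom_comp k n h μ μ⁻¹ hμ (inv_ne_zero hμ) (mul_inv_cancel₀ hμ) hinv hinv')
    (danHom_comp k n h μ⁻¹ μ (inv_ne_zero hμ) hμ (inv_mul_cancel₀ hμ) hinv' hinv), ?_, ?_, ?_⟩
  · show danHom k n h μ hμ hinv (dx k n h) = _
    rw [dx, danHom_mk, psiAux_X0, map_mul]
    rfl
  · show danHom k n h μ hμ hinv (dy k n h) = _
    rw [dy, danHom_mk, psiAux_X1, map_mul]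
    rfl
  · show danHom k n h μ hμ hinv (dz k n h) = _
    rw [dz, danHom_mk, psiAux_X2]
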